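/- Let ρ ∈ E be nonzero and let K > 0. Then there exist C > 0 and θ₀ ∈ (0,1) such that for every θ ∈ (0, θ₀] and all vectors a, b ∈ E satisfying ‖a‖ ≥ θ^{−2}, ‖a − b‖ ≤ K, and ∠(a, ρ) ≤ θ, one has |⟨ρ, a⟩ − ⟨ρ, b⟩ − ‖ρ‖·(‖a‖ − ‖b‖)| ≤ C·θ. -/

import Mathlib

open RealInnerProductSpace

set_option maxHeartbeats 1000000

lemma aux_one_sub_cos (x : ℝ) (hx : 0 ≤ x) (hπ : x ≤ Real.pi) :
    1 - Real.cos x ≤ x ^ 2 / 2 := by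
  have h1 : Real.sin (x / 2) ≤ x / 2 := Real.sin_le (by linarith)
  have h2 : 0 ≤ Real.sin (x / 2) :=
    Real.sin_nonneg_of_nonneg_of_le_pi (by linarith) (by linarith [Real.pi_pos])
  have h3 := Real.cos_sq (x / 2)
  have h4 := Real.sin_sq_add_cos_sq (x / 2)
  rw [show 2 * (x / 2) = x by ring] at h3
  have h5 : Real.sin (x / 2) ^ 2 ≤ (x / 2) ^ 2 := pow_le_pow_left₀ h2 h1 2
  linarith [h3, h4, h5]

theorem inner_sub_approx_norm_sub {E : Type*} [NormedAddCommGroup E]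
    [InnerProductSpace ℝ E] [FiniteDimensional ℝ E]
    (ρ : E) (hρ : ρ ≠ 0) (K : ℝ) (hK : 0 < K) :
    ∃ C > (0 : ℝ), ∃ θ₀ ∈ Set.Ioo (0 : ℝ) 1, ∀ θ ∈ Set.Ioc (0 : ℝ) θ₀, ∀ a b : E,
      θ ^ (-2 : ℤ) ≤ ‖a‖ → ‖a - b‖ ≤ K → InnerProductGeometry.angle a ρ ≤ θ →
      |⟪ρ, a⟫ - ⟪ρ, b⟫ - ‖ρ‖ * (‖a‖ - ‖b‖)| ≤ C * θ := by
  have hρn : 0 < ‖ρ‖ := norm_pos_iff.mpr hρ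
  refine ⟨‖ρ‖ * (K + 2 * K ^ 2) + 1, by positivity,
    min (1/2) (2 * K + 2)⁻¹, ⟨lt_min (by norm_num) (by positivity), by
      have : min (1/2) (2 * K + 2)⁻¹ ≤ 1/2 := min_le_left _ _
      linarith⟩, ?_⟩
  intro θ hθ a b ha hab hang
  obtain ⟨hθ0, hθ1⟩ := hθ
  have hθK : θ ≤ (2 * K + 2)⁻¹ := hθ1.trans (min_le_right _ _)
  have hθh : θ ≤ 1/2 := hθ1.trans (min_le_left _ _)
  have hKpos : (0:ℝ) < 2 * K + 2 := by linarith
  have hθK' : θ * (2 * K + 2) ≤ 1 := by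
    calc θ * (2 * K + 2) ≤ (2 * K + 2)⁻¹ * (2 * K + 2) :=
          mul_le_mul_of_nonneg_right hθK hKpos.le
      _ = 1 := inv_mul_cancel₀ hKpos.ne'
  have hz : θ ^ (-2 : ℤ) = (θ ^ 2)⁻¹ := by rw [zpow_neg, zpow_two, pow_two]
  rw [hz] at ha
  have hθ2pos : (0:ℝ) < θ ^ 2 := by positivity
  have ha' : 1 ≤ ‖a‖ * θ ^ 2 := by
    have h := mul_le_mul_of_nonneg_right ha (sq_nonneg θ)
    rwa [inv_mul_cancel₀ hθ2pos.ne'] at h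
  have hθ2 : θ ^ 2 ≤ θ := by
    have h := mul_le_mul_of_nonneg_left hθh hθ0.le
    calc θ ^ 2 = θ * θ := by ring
      _ ≤ θ * (1/2) := h
      _ ≤ θ := by linarith
  have hna : 2 * K + 2 ≤ ‖a‖ := by
    have h1 : 2 * K + 2 ≤ (θ ^ 2)⁻¹ := by
      rw [inv_eq_one_div, le_div_iff₀ hθ2pos]
      have h2 : (2 * K + 2) * θ ^ 2 ≤ (2 * K + 2) * θ :=
        mul_le_mul_of_nonneg_left hθ2 hKpos.le
      linarith [hθK']
    linarith
  have hapos : (0:ℝ) < ‖a‖ := by linarith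
  -- setup
  set v := a - b with hv
  clear_value v
  have hvK : ‖v‖ ≤ K := hv ▸ hab
  set t : ℝ := ⟪a, v⟫ / ‖a‖ with ht
  clear_value t
  have hta : t * ‖a‖ = ⟪a, v⟫ := by rw [ht]; field_simp
  have htv' : |t| ≤ ‖v‖ := by
    rw [ht, abs_div, abs_of_nonneg hapos.le, div_le_iff₀ hapos]
    exact (abs_real_inner_le_norm a v).trans (le_of_eq (mul_comm _ _))
  have htb : |t| ≤ K := htv'.trans hvK
  have htb' : -K ≤ t ∧ t ≤ K := abs_le.mp htb
  have hb2 : ‖b‖ ^ 2 = ‖a‖ ^ 2 - 2 * (t * ‖a‖) + ‖v‖ ^ 2 := by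
    rw [show b = a - v by rw [hv]; abel, @norm_sub_sq_real, hta]
  have hbn : 0 ≤ ‖b‖ := norm_nonneg b
  have htv : t ^ 2 ≤ ‖v‖ ^ 2 := by
    calc t ^ 2 = |t| ^ 2 := (sq_abs t).symm
      _ ≤ ‖v‖ ^ 2 := pow_le_pow_left₀ (abs_nonneg t) htv' 2
  have hat0 : 0 ≤ ‖a‖ - t := by linarith [htb'.2]
  have hblow : ‖a‖ - t ≤ ‖b‖ := by
    have hq : (‖a‖ - t) ^ 2 ≤ ‖b‖ ^ 2 := by linarith [hb2, htv]
    exact (pow_le_pow_iff_left₀ hat0 hbn (by norm_num)).mp hq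
  set d : ℝ := ‖b‖ - (‖a‖ - t) with hd
  clear_value d
  have hd0 : 0 ≤ d := by rw [hd]; linarith
  have hdiff : d * (‖b‖ + (‖a‖ - t)) = ‖v‖ ^ 2 - t ^ 2 := by
    rw [hd]; linear_combination hb2
  have hden : 1 / (2 * θ ^ 2) ≤ ‖b‖ + (‖a‖ - t) := by
    have h1 : 1 / θ ^ 2 ≤ ‖a‖ := by
      rw [div_le_iff₀ hθ2pos]; linarith [ha']
    have h2 : K ≤ 1 / (2 * θ ^ 2) := by
      rw [le_div_iff₀ (by positivity)]
      have e1 : 2 * K * θ ≤ 1 := by linarith [hθK', hθ0]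
      have e2 : 2 * K * θ * θ ≤ 1 * θ := mul_le_mul_of_nonneg_right e1 hθ0.le
      linarith [e2, hθh]
    have h3 : 1 / θ ^ 2 - 1 / (2 * θ ^ 2) = 1 / (2 * θ ^ 2) := by
      field_simp; ring
    linarith [htb'.2]
  have h7 : ‖v‖ ^ 2 ≤ K ^ 2 := pow_le_pow_left₀ (norm_nonneg v) hvK 2
  have h5 : d * (1 / (2 * θ ^ 2)) ≤ K ^ 2 := by
    have h6 := mul_le_mul_of_nonneg_left hden hd0
    linarith [h6, hdiff, h7, sq_nonneg t]
  have hdle : d ≤ 2 * K ^ 2 * θ ^ 2 := by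
    rw [mul_one_div, div_le_iff₀ (by positivity : (0:ℝ) < 2 * θ ^ 2)] at h5
    linarith [h5]
  have hkey : |‖a‖ - ‖b‖ - t| ≤ 2 * K ^ 2 * θ ^ 2 := by
    rw [show ‖a‖ - ‖b‖ - t = -d by rw [hd]; ring, abs_neg, abs_of_nonneg hd0]
    exact hdle
  -- angle part
  set w := ρ - (‖ρ‖ / ‖a‖) • a with hw
  clear_value w
  have hcos := InnerProductGeometry.cos_angle a ρ
  have hangnn := InnerProductGeometry.angle_nonneg a ρ
  have hangpi := InnerProductGeometry.angle_le_pi a ρ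
  have hcosge : 1 - θ ^ 2 / 2 ≤ Real.cos (InnerProductGeometry.angle a ρ) := by
    have h1 := aux_one_sub_cos _ hangnn hangpi
    have h2 : InnerProductGeometry.angle a ρ ^ 2 ≤ θ ^ 2 := pow_le_pow_left₀ hangnn hang 2
    linarith
  have hiar : ⟪a, ρ⟫ = Real.cos (InnerProductGeometry.angle a ρ) * (‖a‖ * ‖ρ‖) := by
    rw [hcos]; field_simp
  have hwsq : ‖w‖ ^ 2 ≤ ‖ρ‖ ^ 2 * θ ^ 2 := by
    rw [hw, @norm_sub_sq_real, norm_smul, real_inner_smul_right]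
    rw [Real.norm_eq_abs, abs_of_nonneg (by positivity)]
    have h1 : ‖ρ‖ / ‖a‖ * ‖a‖ = ‖ρ‖ := div_mul_cancel₀ _ hapos.ne'
    have h2 : ⟪ρ, a⟫ = ⟪a, ρ⟫ := real_inner_comm a ρ
    rw [h1, h2, hiar]
    have h4 : ‖ρ‖ / ‖a‖ * (Real.cos (InnerProductGeometry.angle a ρ) * (‖a‖ * ‖ρ‖))
        = Real.cos (InnerProductGeometry.angle a ρ) * ‖ρ‖ ^ 2 := by
      field_simp
    rw [h4]
    have h6 := mul_le_mul_of_nonneg_left hcosge (by positivity : (0:ℝ) ≤ 2 * ‖ρ‖ ^ 2)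
    linarith [h6]
  have hwn : ‖w‖ ≤ ‖ρ‖ * θ := by
    have h8 : ‖w‖ ^ 2 ≤ (‖ρ‖ * θ) ^ 2 := by linarith [hwsq]
    exact (pow_le_pow_iff_left₀ (norm_nonneg w) (by positivity) (by norm_num)).mp h8
  -- main identity
  have h_iv : ⟪ρ, v⟫ = ⟪ρ, a⟫ - ⟪ρ, b⟫ := by rw [hv, inner_sub_right]
  have h_wv : ⟪w, v⟫ = ⟪ρ, v⟫ - ‖ρ‖ / ‖a‖ * ⟪a, v⟫ := by
    rw [hw, inner_sub_left, real_inner_smul_left]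
  have h_st : ‖ρ‖ / ‖a‖ * ⟪a, v⟫ = ‖ρ‖ * t := by
    rw [← hta]; field_simp
  have hident : ⟪ρ, a⟫ - ⟪ρ, b⟫ - ‖ρ‖ * (‖a‖ - ‖b‖)
      = ⟪w, v⟫ - ‖ρ‖ * (‖a‖ - ‖b‖ - t) := by
    rw [h_wv, h_iv, h_st]; ring
  rw [hident]
  have h1 : |⟪w, v⟫| ≤ ‖ρ‖ * θ * K := by
    calc |⟪w, v⟫| ≤ ‖w‖ * ‖v‖ := abs_real_inner_le_norm w v
      _ ≤ ‖ρ‖ * θ * K := mul_le_mul hwn hvK (norm_nonneg v) (by positivity)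
  have h2 : |‖ρ‖ * (‖a‖ - ‖b‖ - t)| ≤ ‖ρ‖ * (2 * K ^ 2 * θ) := by
    rw [abs_mul, abs_of_nonneg hρn.le]
    have h3 : |‖a‖ - ‖b‖ - t| ≤ 2 * K ^ 2 * θ := by
      have h9 := mul_le_mul_of_nonneg_left hθ2 (by positivity : (0:ℝ) ≤ 2 * K ^ 2)
      linarith [hkey, h9]
    exact mul_le_mul_of_nonneg_left h3 hρn.le
  calc |⟪w, v⟫ - ‖ρ‖ * (‖a‖ - ‖b‖ - t)| ≤ |⟪w, v⟫| + |‖ρ‖ * (‖a‖ - ‖b‖ - t)| := abs_sub _ _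
    _ ≤ ‖ρ‖ * θ * K + ‖ρ‖ * (2 * K ^ 2 * θ) := by linarith
    _ ≤ (‖ρ‖ * (K + 2 * K ^ 2) + 1) * θ := by linarith [hθ0.le]
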